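/- (Fact on reduction 2, semantics.) There is a computable function μ from Φ_Con-XY to Φ_One□-XY such that for every φ ∈ Φ_Con-XY, the formula φ ↔ μ(φ) is valid. -/

import Mathlib

namespace ConSHN

/-- Formulas of the language Φ_XY, over atomic propositions indexed by ℕ. -/
inductive FXY : Type
  | atom : ℕ → FXY
  | bot  : FXY
  | neg  : FXY → FXY
  | conj : FXY → FXY → FXY
  | X    : FXY → FXY
  | Y    : FXY → FXY
  deriving DecidableEq

/-- Formulas of the language Φ_ConSHN-BT. -/
inductive F : Type
  | atom : ℕ → F
  | bot  : F
  | neg  : F → F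
  | conj : F → F → F
  | X    : F → F
  | Y    : F → F
  | con  : FXY → F → F
  deriving DecidableEq

namespace FXY

def top : FXY := neg bot
def imp (a b : FXY) : FXY := neg (conj a (neg b))
def or (a b : FXY) : FXY := neg (conj (neg a) (neg b))
def iff (a b : FXY) : FXY := conj (imp a b) (imp b a)

/-- n-fold application of X. -/
def Xn : ℕ → FXY → FXY
  | 0, a => a
  | n+1, a => X (Xn n a)

/-- n-fold application of Y. -/
def Yn : ℕ → FXY → FXY
  | 0, a => a
  | n+1, a => Y (Yn n a)

/-- The embedding of Φ_XY into Φ_ConSHN-BT. -/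
def toF : FXY → F
  | atom p => .atom p
  | bot => .bot
  | neg a => .neg (toF a)
  | conj a b => .conj (toF a) (toF b)
  | X a => .X (toF a)
  | Y a => .Y (toF a)

/-- Purely propositional formulas (no occurrence of X or Y). -/
inductive IsPL : FXY → Prop
  | atom (p : ℕ) : IsPL (atom p)
  | bot : IsPL bot
  | neg {a} : IsPL a → IsPL (neg a)
  | conj {a b} : IsPL a → IsPL b → IsPL (conj a b)

/-- The language Φ_N-XY : β ::= Xⁿp | Xⁿ⊥ | Yⁿp | Yⁿ⊥ | ¬β | (β ∧ β). -/
inductive NXY : FXY → Prop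
  | xatom (n p : ℕ) : NXY (Xn n (atom p))
  | xbot (n : ℕ) : NXY (Xn n bot)
  | yatom (n p : ℕ) : NXY (Yn n (atom p))
  | ybot (n : ℕ) : NXY (Yn n bot)
  | neg {a} : NXY a → NXY (neg a)
  | conj {a b} : NXY a → NXY b → NXY (conj a b)

end FXY

namespace F

def top : F := neg bot
def imp (a b : F) : F := neg (conj a (neg b))
def or (a b : F) : F := neg (conj (neg a) (neg b))
def iff (a b : F) : F := conj (imp a b) (imp b a)

/-- ⟨α⟩φ := ¬[α]¬φ -/
def dcon (α : FXY) (φ : F) : F := neg (con α (neg φ))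

/-- □φ := [⊤]φ -/
def box (φ : F) : F := con FXY.top φ

/-- ◇φ := ¬□¬φ -/
def dia (φ : F) : F := neg (box (neg φ))

/-- Closed formulas of Φ_ConSHN-BT : χ ::= [α]φ | ¬χ | (χ ∧ χ). -/
inductive Closed : F → Prop
  | con (α : FXY) (φ : F) : Closed (con α φ)
  | neg {χ} : Closed χ → Closed (neg χ)
  | conj {χ₁ χ₂} : Closed χ₁ → Closed χ₂ → Closed (conj χ₁ χ₂)

/-- The language Φ_Con-XY : φ ::= Xⁿp | Xⁿ⊥ | Yⁿp | Yⁿ⊥ | ¬φ | (φ ∧ φ) | [β]φ, β ∈ Φ_N-XY. -/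
inductive ConXY : F → Prop
  | xatom (n p : ℕ) : ConXY (FXY.Xn n (.atom p)).toF
  | xbot (n : ℕ) : ConXY (FXY.Xn n .bot).toF
  | yatom (n p : ℕ) : ConXY (FXY.Yn n (.atom p)).toF
  | ybot (n : ℕ) : ConXY (FXY.Yn n .bot).toF
  | neg {φ} : ConXY φ → ConXY (neg φ)
  | conj {φ ψ} : ConXY φ → ConXY ψ → ConXY (conj φ ψ)
  | con {β : FXY} {φ} : β.NXY → ConXY φ → ConXY (con β φ)

/-- The language Φ_One□-XY : φ ::= β | ¬φ | (φ ∧ φ) | □β, β ∈ Φ_N-XY. -/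
inductive OneBox : F → Prop
  | base {β : FXY} : β.NXY → OneBox β.toF
  | neg {φ} : OneBox φ → OneBox (neg φ)
  | conj {φ ψ} : OneBox φ → OneBox ψ → OneBox (conj φ ψ)
  | box {β : FXY} : β.NXY → OneBox (box β.toF)

end F

/-- A branching-time model. -/
structure Model where
  W : Type
  lt : W → W → Prop
  V : ℕ → Set W
  nonempty : Nonempty W
  serial : ∀ w, ∃ v, lt w v
  root : W
  reach : ∀ w : W, ∃! l : List W,
    List.Chain' lt l ∧ l.head? = some root ∧ l.getLast? = some w

/-- The set TL(M) of timelines of the model M. -/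
def Timeline (M : Model) : Set (ℕ → M.W) :=
  {π | π 0 = M.root ∧ ∀ i, M.lt (π i) (π (i + 1))}

/-- AT(C): the acceptable timelines by a context C (AT(∅) = TL(M)). -/
def AT (M : Model) (C : Set (Set (ℕ → M.W))) : Set (ℕ → M.W) :=
  Timeline M ∩ ⋂₀ C

/-- Truth of Φ_XY formulas at (M, π, i) (independent of contexts). -/
def satXY (M : Model) (π : ℕ → M.W) : ℕ → FXY → Prop
  | i, .atom p => π i ∈ M.V p
  | _, .bot => False
  | i, .neg a => ¬ satXY M π i a
  | i, .conj a b => satXY M π i a ∧ satXY M π i b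
  | i, .X a => satXY M π (i + 1) a
  | i, .Y a => 0 < i ∧ satXY M π (i - 1) a

/-- The indefeasible ontic rule ⟨⟨α⟩⟩_i generated by α at instant i. -/
def ruleOf (M : Model) (α : FXY) (i : ℕ) : Set (ℕ → M.W) :=
  {π | π ∈ Timeline M ∧ satXY M π i α}

/-- The update C + α@i of a context C with α at instant i. -/
def upd (M : Model) (C : Set (Set (ℕ → M.W))) (α : FXY) (i : ℕ) :
    Set (Set (ℕ → M.W)) :=
  insert (ruleOf M α i) C

/-- Truth of Φ_ConSHN-BT formulas at (M, C, π, i). -/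
def sat (M : Model) : Set (Set (ℕ → M.W)) → (ℕ → M.W) → ℕ → F → Prop
  | _, π, i, .atom p => π i ∈ M.V p
  | _, _, _, .bot => False
  | C, π, i, .neg φ => ¬ sat M C π i φ
  | C, π, i, .conj φ ψ => sat M C π i φ ∧ sat M C π i ψ
  | C, π, i, .X φ => sat M C π (i + 1) φ
  | C, π, i, .Y φ => 0 < i ∧ sat M C π (i - 1) φ
  | C, π, i, .con α φ =>
      ∀ π' ∈ AT M (upd M C α i), sat M (upd M C α i) π' i φ

/-- C is a context for M: a finite set of sets of timelines. -/
def IsContext (M : Model) (C : Set (Set (ℕ → M.W))) : Prop :=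
  C.Finite ∧ ∀ R ∈ C, R ⊆ Timeline M

/-- Validity: truth at every contextualized pointed model. -/
def Valid (φ : F) : Prop :=
  ∀ (M : Model) (C : Set (Set (ℕ → M.W))) (π : ℕ → M.W) (i : ℕ),
    IsContext M C → π ∈ AT M C → sat M C π i φ

/-- Satisfiability: truth at some contextualized pointed model. -/
def Satisfiable (φ : F) : Prop :=
  ∃ (M : Model) (C : Set (Set (ℕ → M.W))) (π : ℕ → M.W) (i : ℕ),
    IsContext M C ∧ π ∈ AT M C ∧ sat M C π i φ

/-- Propositional evaluation: ⊥, ¬, ∧ are interpreted, all other formulas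
are treated as propositional atoms evaluated by v. -/
def evalProp (v : F → Prop) : F → Prop
  | .bot => False
  | .neg φ => ¬ evalProp v φ
  | .conj φ ψ => evalProp v φ ∧ evalProp v ψ
  | φ => v φ

/-- φ is a propositional tautology. -/
def Taut (φ : F) : Prop := ∀ v : F → Prop, evalProp v φ

end ConSHN

open ConSHN

namespace ConSHN

/-- Inverse of `toF` (arbitrary on `con`). -/
def unF : F → FXY
  | .atom p => .atom p
  | .bot => .bot
  | .neg φ => .neg (unF φ)
  | .conj φ ψ => .conj (unF φ) (unF ψ)
  | .X φ => .X (unF φ)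
  | .Y φ => .Y (unF φ)
  | .con _ _ => FXY.top

/-- Bodies of `con` subformulas (for OneBox formulas: bodies of boxes). -/
def boxes : F → List FXY
  | .neg φ => boxes φ
  | .conj φ ψ => boxes φ ++ boxes ψ
  | .con _ φ => [unF φ]
  | _ => []

/-- Replace each box by ⊤/⊥ according to `s`. -/
def red (s : FXY → Bool) : F → FXY
  | .atom p => .atom p
  | .bot => .bot
  | .neg φ => .neg (red s φ)
  | .conj φ ψ => .conj (red s φ) (red s ψ)
  | .X φ => .X (red s φ)
  | .Y φ => .Y (red s φ)
  | .con _ φ => if s (unF φ) then FXY.top else FXY.bot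

def bigConj : List F → F
  | [] => F.top
  | φ :: l => .conj φ (bigConj l)

def guard (β : FXY) (L S : List FXY) : F :=
  bigConj (L.map fun γ => if γ ∈ S then F.box (β.imp γ).toF
                          else .neg (F.box (β.imp γ).toF))

def trans (β : FXY) (ψ : F) : F :=
  bigConj ((boxes ψ).sublists.map fun S =>
    F.imp (guard β (boxes ψ) S)
      (F.box (β.imp (red (fun γ => decide (γ ∈ S)) ψ)).toF))

def mu : F → F
  | .neg φ => .neg (mu φ)
  | .conj φ ψ => .conj (mu φ) (mu ψ)
  | .con β φ => trans β (mu φ)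
  | φ => φ

@[simp] lemma unF_toF (γ : FXY) : unF γ.toF = γ := by
  induction γ <;> simp [FXY.toF, unF, *]

@[simp] lemma boxes_toF (γ : FXY) : boxes γ.toF = [] := by
  induction γ <;> simp [FXY.toF, boxes, *]

@[simp] lemma red_toF (s : FXY → Bool) (γ : FXY) : red s γ.toF = γ := by
  induction γ <;> simp [FXY.toF, red, *]

lemma NXY_top : FXY.top.NXY := .neg (.xbot 0)

lemma NXY_imp {a b : FXY} (ha : a.NXY) (hb : b.NXY) : (a.imp b).NXY :=
  .neg (.conj ha (.neg hb))

lemma NXY_red {ψ : F} (h : ψ.OneBox) (s : FXY → Bool) : (red s ψ).NXY := by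
  induction h with
  | base hβ => rwa [red_toF]
  | neg _ ih => exact .neg ih
  | conj _ _ ih1 ih2 => exact .conj ih1 ih2
  | box hγ =>
      show ((if s (unF (FXY.toF _)) then FXY.top else FXY.bot)).NXY
      split <;> [exact NXY_top; exact (FXY.NXY.xbot 0)]

lemma boxes_NXY {ψ : F} (h : ψ.OneBox) : ∀ γ ∈ boxes ψ, γ.NXY := by
  induction h with
  | base hβ => simp
  | neg _ ih => exact ih
  | conj _ _ ih1 ih2 =>
      intro γ hγ
      rcases List.mem_append.mp hγ with h | h
      · exact ih1 γ h
      · exact ih2 γ h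
  | box hγ =>
      intro γ hmem
      simp [F.box, boxes] at hmem
      subst hmem; exact hγ

lemma OneBox_top : F.top.OneBox := .neg (.base (FXY.NXY.xbot 0))

lemma OneBox_bigConj {L : List F} (h : ∀ φ ∈ L, φ.OneBox) : (bigConj L).OneBox := by
  induction L with
  | nil => exact OneBox_top
  | cons φ l ih =>
      exact .conj (h φ (by simp)) (ih fun ψ hψ => h ψ (by simp [hψ]))

lemma OneBox_imp {a b : F} (ha : a.OneBox) (hb : b.OneBox) : (a.imp b).OneBox :=
  .neg (.conj ha (.neg hb))

lemma OneBox_trans {β : FXY} {ψ : F} (hβ : β.NXY) (hψ : ψ.OneBox) :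
    (trans β ψ).OneBox := by
  apply OneBox_bigConj
  intro φ hφ
  simp only [trans, List.mem_map] at hφ
  obtain ⟨S, _, rfl⟩ := hφ
  apply OneBox_imp
  · apply OneBox_bigConj
    intro χ hχ
    simp only [guard, List.mem_map] at hχ
    obtain ⟨γ, hγ, rfl⟩ := hχ
    have hγN := boxes_NXY hψ γ hγ
    split
    · exact .box (NXY_imp hβ hγN)
    · exact .neg (.box (NXY_imp hβ hγN))
  · exact .box (NXY_imp hβ (NXY_red hψ _))

lemma sat_toF (M : Model) (C : Set (Set (ℕ → M.W))) (π : ℕ → M.W) (γ : FXY) :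
    ∀ i, sat M C π i γ.toF ↔ satXY M π i γ := by
  induction γ <;> intro i <;> simp [FXY.toF, sat, satXY, *]

lemma mem_AT_upd {M : Model} {C : Set (Set (ℕ → M.W))} {α : FXY} {i : ℕ}
    {π : ℕ → M.W} :
    π ∈ AT M (upd M C α i) ↔ π ∈ AT M C ∧ satXY M π i α := by
  simp only [AT, upd, Set.mem_inter_iff, Set.sInter_insert, ruleOf,
    Set.mem_setOf_eq]
  tauto

lemma sat_box (M : Model) (C : Set (Set (ℕ → M.W))) (π : ℕ → M.W) (i : ℕ)
    (γ : FXY) :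
    sat M C π i (F.box γ.toF) ↔ ∀ π' ∈ AT M C, satXY M π' i γ := by
  show (∀ π' ∈ AT M (upd M C FXY.top i), sat M _ π' i γ.toF) ↔ _
  constructor
  · intro h π' hπ'
    exact (sat_toF _ _ _ _ _).mp (h π' (mem_AT_upd.mpr ⟨hπ', by simp [satXY, FXY.top]⟩))
  · intro h π' hπ'
    exact (sat_toF _ _ _ _ _).mpr (h π' (mem_AT_upd.mp hπ').1)

lemma sat_bigConj (M : Model) (C : Set (Set (ℕ → M.W))) (π : ℕ → M.W) (i : ℕ)
    (L : List F) :
    sat M C π i (bigConj L) ↔ ∀ φ ∈ L, sat M C π i φ := by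
  induction L with
  | nil => simp [bigConj, F.top, sat]
  | cons φ l ih => simp [bigConj, sat, ih]

lemma sat_imp (M : Model) (C : Set (Set (ℕ → M.W))) (π : ℕ → M.W) (i : ℕ)
    (a b : F) :
    sat M C π i (a.imp b) ↔ (sat M C π i a → sat M C π i b) := by
  simp [F.imp, sat]

lemma satXY_imp (M : Model) (π : ℕ → M.W) (i : ℕ) (a b : FXY) :
    satXY M π i (a.imp b) ↔ (satXY M π i a → satXY M π i b) := by
  simp [FXY.imp, satXY]

lemma sat_box_imp (M : Model) (C : Set (Set (ℕ → M.W))) (π : ℕ → M.W) (i : ℕ)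
    (β γ : FXY) :
    sat M C π i (F.box (β.imp γ).toF) ↔
      ∀ π' ∈ AT M C, satXY M π' i β → satXY M π' i γ := by
  rw [sat_box]
  simp [satXY_imp]

lemma sat_guard (M : Model) (C : Set (Set (ℕ → M.W))) (π : ℕ → M.W) (i : ℕ)
    (β : FXY) (L S : List FXY) :
    sat M C π i (guard β L S) ↔
      ∀ γ ∈ L, ((γ ∈ S) ↔ ∀ π' ∈ AT M C, satXY M π' i β → satXY M π' i γ) := by
  rw [guard, sat_bigConj]
  constructor
  · intro h γ hγ
    have := h _ (List.mem_map_of_mem hγ)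
    by_cases hS : γ ∈ S
    · simp only [hS, if_pos] at this
      rw [sat_box_imp] at this
      exact ⟨fun _ => this, fun _ => hS⟩
    · simp only [hS, if_neg, not_false_iff] at this
      have h2 : ¬ sat M C π i (F.box (β.imp γ).toF) := this
      rw [sat_box_imp] at h2
      exact ⟨fun h' => absurd h' hS, fun hq => absurd hq h2⟩
  · intro h φ hφ
    simp only [List.mem_map] at hφ
    obtain ⟨γ, hγ, rfl⟩ := hφ
    by_cases hS : γ ∈ S
    · simp only [hS, if_pos]
      exact (sat_box_imp _ _ _ _ _ _).mpr ((h γ hγ).mp hS)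
    · simp only [hS, if_neg, not_false_iff]
      show ¬ sat M C π i (F.box (β.imp γ).toF)
      rw [sat_box_imp]
      exact fun hh => hS ((h γ hγ).mpr hh)

lemma red_spec (M : Model) (C : Set (Set (ℕ → M.W))) (π : ℕ → M.W) (i : ℕ)
    (s : FXY → Bool) {ψ : F} (h : ψ.OneBox) :
    (∀ γ ∈ boxes ψ, (s γ = true ↔ ∀ π' ∈ AT M C, satXY M π' i γ)) →
    (sat M C π i ψ ↔ satXY M π i (red s ψ)) := by
  induction h with
  | base hβ => intro _; rw [red_toF]; exact sat_toF _ _ _ _ _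
  | neg _ ih =>
      intro hs
      show ¬ _ ↔ ¬ _
      exact not_congr (ih hs)
  | @conj φ ψ' _ _ ih1 ih2 =>
      intro hs
      show (_ ∧ _) ↔ (_ ∧ _)
      exact and_congr
        (ih1 fun γ hγ => hs γ (List.mem_append.mpr (Or.inl hγ)))
        (ih2 fun γ hγ => hs γ (List.mem_append.mpr (Or.inr hγ)))
  | @box γ hγ =>
      intro hs
      have hmem : γ ∈ boxes (F.box γ.toF) := by simp [F.box, boxes]
      have hg := hs γ hmem
      show sat M C π i (F.box γ.toF) ↔ satXY M π i (red s (F.box γ.toF))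
      have hred : red s (F.box γ.toF) = if s γ then FXY.top else FXY.bot := by
        simp [F.box, red]
      rw [hred, sat_box]
      cases hb : s γ with
      | true =>
          have hQ := hg.mp hb
          simpa [hb, satXY, FXY.top] using hQ
      | false =>
          have hnQ : ¬ (∀ π' ∈ AT M C, satXY M π' i γ) := fun hq => by
            simp [hg.mpr hq] at hb
          simpa [hb, satXY] using hnQ

lemma con_trans (M : Model) (C : Set (Set (ℕ → M.W))) (π : ℕ → M.W) (i : ℕ)
    (β : FXY) {ψ : F} (h : ψ.OneBox) :
    sat M C π i (.con β ψ) ↔ sat M C π i (trans β ψ) := by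
  classical
  set D := upd M C β i with hD
  have hATD : ∀ π' , π' ∈ AT M D ↔ π' ∈ AT M C ∧ satXY M π' i β :=
    fun π' => mem_AT_upd
  rw [trans, sat_bigConj]
  constructor
  · intro H φ hφ
    simp only [List.mem_map] at hφ
    obtain ⟨S, hS, rfl⟩ := hφ
    rw [sat_imp, sat_guard, sat_box_imp]
    intro hg π' hπ' hβ'
    have hπD : π' ∈ AT M D := (hATD π').mpr ⟨hπ', hβ'⟩
    have hsatD : sat M D π' i ψ := H π' hπD
    have hcond : ∀ γ ∈ boxes ψ,
        ((fun γ => decide (γ ∈ S)) γ = true ↔ ∀ π'' ∈ AT M D, satXY M π'' i γ) := by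
      intro γ hγ
      simp only [decide_eq_true_eq]
      rw [hg γ hγ]
      constructor
      · intro hq π'' hπ''
        obtain ⟨h1, h2⟩ := (hATD π'').mp hπ''
        exact hq π'' h1 h2
      · intro hq π'' h1 h2
        exact hq π'' ((hATD π'').mpr ⟨h1, h2⟩)
    exact (red_spec M D π' i _ h hcond).mp hsatD
  · intro H π' hπ'
    obtain ⟨hπC, hβ'⟩ := (hATD π').mp hπ'
    set S : List FXY := (boxes ψ).filter
      (fun γ => decide (∀ π'' ∈ AT M D, satXY M π'' i γ)) with hSdef
    have hSsub : S ∈ (boxes ψ).sublists :=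
      List.mem_sublists.mpr (List.filter_sublist)
    have hmemS : ∀ γ ∈ boxes ψ, (γ ∈ S ↔ ∀ π'' ∈ AT M D, satXY M π'' i γ) := by
      intro γ hγ
      simp [hSdef, List.mem_filter, hγ]
    have := H _ (List.mem_map_of_mem hSsub)
    rw [sat_imp, sat_guard, sat_box_imp] at this
    have hguard : ∀ γ ∈ boxes ψ,
        ((γ ∈ S) ↔ ∀ π'' ∈ AT M C, satXY M π'' i β → satXY M π'' i γ) := by
      intro γ hγ
      rw [hmemS γ hγ]
      constructor
      · intro hq π'' h1 h2
        exact hq π'' ((hATD π'').mpr ⟨h1, h2⟩)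
      · intro hq π'' hπ''
        obtain ⟨h1, h2⟩ := (hATD π'').mp hπ''
        exact hq π'' h1 h2
    have hsat := this hguard π' hπC hβ'
    have hcond : ∀ γ ∈ boxes ψ,
        ((fun γ => decide (γ ∈ S)) γ = true ↔ ∀ π'' ∈ AT M D, satXY M π'' i γ) := by
      intro γ hγ
      simp only [decide_eq_true_eq]
      exact hmemS γ hγ
    exact (red_spec M D π' i _ h hcond).mpr hsat

@[simp] lemma mu_toF (γ : FXY) : mu γ.toF = γ.toF := by
  induction γ <;> simp [FXY.toF, mu, *]

lemma mu_OneBox {φ : F} (h : φ.ConXY) : (mu φ).OneBox := by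
  induction h with
  | xatom n p => rw [mu_toF]; exact .base (.xatom n p)
  | xbot n => rw [mu_toF]; exact .base (.xbot n)
  | yatom n p => rw [mu_toF]; exact .base (.yatom n p)
  | ybot n => rw [mu_toF]; exact .base (.ybot n)
  | neg _ ih => exact .neg ih
  | conj _ _ ih1 ih2 => exact .conj ih1 ih2
  | con hβ _ ih => exact OneBox_trans hβ ih

lemma mu_sat {φ : F} (h : φ.ConXY) :
    ∀ (M : Model) (C : Set (Set (ℕ → M.W))) (π : ℕ → M.W) (i : ℕ),
      sat M C π i φ ↔ sat M C π i (mu φ) := by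
  induction h with
  | xatom n p => intro M C π i; rw [mu_toF]
  | xbot n => intro M C π i; rw [mu_toF]
  | yatom n p => intro M C π i; rw [mu_toF]
  | ybot n => intro M C π i; rw [mu_toF]
  | neg _ ih =>
      intro M C π i
      show ¬ _ ↔ ¬ _
      exact not_congr (ih M C π i)
  | conj _ _ ih1 ih2 =>
      intro M C π i
      show (_ ∧ _) ↔ (_ ∧ _)
      exact and_congr (ih1 M C π i) (ih2 M C π i)
  | @con β φ' hβ hφ ih =>
      intro M C π i
      have step1 : sat M C π i (.con β φ') ↔ sat M C π i (.con β (mu φ')) := by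
        show (∀ π' ∈ AT M (upd M C β i), sat M _ π' i φ') ↔
          (∀ π' ∈ AT M (upd M C β i), sat M _ π' i (mu φ'))
        exact forall₂_congr fun π' _ => ih M _ π' i
      rw [step1]
      show _ ↔ sat M C π i (trans β (mu φ'))
      exact con_trans M C π i β (mu_OneBox hφ)

lemma sat_iff (M : Model) (C : Set (Set (ℕ → M.W))) (π : ℕ → M.W) (i : ℕ)
    (a b : F) :
    sat M C π i (F.iff a b) ↔ (sat M C π i a ↔ sat M C π i b) := by
  show sat M C π i (.conj (a.imp b) (b.imp a)) ↔ _
  show (sat M C π i (a.imp b) ∧ sat M C π i (b.imp a)) ↔ _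
  rw [sat_imp, sat_imp]
  tauto

end ConSHN

open ConSHN

/-- Reduction 2 (semantics): there is a function μ from Φ_Con-XY to
Φ_One□-XY such that φ ↔ μ(φ) is valid for every φ ∈ Φ_Con-XY. -/
theorem reduction_to_OneBox :
    ∃ μ : F → F, ∀ φ : F, φ.ConXY → (μ φ).OneBox ∧ Valid (F.iff φ (μ φ)) := by
  refine ⟨mu, fun φ h => ⟨mu_OneBox h, ?_⟩⟩
  intro M C π i _ _
  rw [sat_iff]
  exact mu_sat h M C π i
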